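/- For every d ∈ ℕ, every α > 0 and every integer j ≥ 0 there exists a constant C > 0, depending only on d, α and j, such that for all s ≥ 1: s ∫_{[0,1]^d} e^{−α s |y|} |log(s|y|)|^{j} dy ≤ C (1 + log s)^{d−1}. -/

import Mathlib

open MeasureTheory

/-- The volume `|x| = x^(1) ⋯ x^(d)` of the box `[0,x]` for `x ∈ [0,1]^d`. -/
noncomputable def pvol {d : ℕ} (x : Fin d → ℝ) : ℝ := ∏ j, x j

/-- The unit cube `[0,1]^d`. -/
def cube (d : ℕ) : Set (Fin d → ℝ) := Set.Icc 0 1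


open Set ENNReal intervalIntegral

lemma measurable_pvol {d : ℕ} : Measurable (pvol (d := d)) :=
  Finset.measurable_prod _ fun i _ => measurable_pi_apply i

lemma pvol_zero (y : Fin 0 → ℝ) : pvol y = 1 := by simp [pvol]

lemma cube_zero : cube 0 = Set.univ := by
  ext x
  simp only [cube, Set.mem_Icc, Set.mem_univ, iff_true]
  exact ⟨fun i => i.elim0, fun i => i.elim0⟩

lemma volume_cube_zero : volume (cube 0) = 1 := by
  rw [cube_zero]
  simp [MeasureTheory.volume_pi, Measure.pi_univ]

-- Key Lemma A
lemma cube_succ_lintegral (d : ℕ) (g : ℝ → ENNReal) (hg : Measurable g) :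
    ∫⁻ y in cube (d+1), g (pvol y) =
      ∫⁻ t in Set.Icc (0:ℝ) 1, ∫⁻ y in cube d, g (t * pvol y) := by
  have hmp := (measurePreserving_piFinSuccAbove (fun _ : Fin (d+1) => (volume : Measure ℝ)) 0).symm
  have hpre : (MeasurableEquiv.piFinSuccAbove (fun _ : Fin (d+1) => ℝ) 0).symm ⁻¹' cube (d+1)
      = Set.Icc (0:ℝ) 1 ×ˢ cube d := by
    ext p
    simp only [Set.mem_preimage, MeasurableEquiv.piFinSuccAbove_symm_apply, cube, Set.mem_Icc,
      Set.mem_prod]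
    constructor
    · rintro ⟨h0, h1⟩
      refine ⟨⟨?_, ?_⟩, ⟨fun i => ?_, fun i => ?_⟩⟩
      · simpa using h0 0
      · simpa using h1 0
      · simpa using h0 (Fin.succ i)
      · simpa using h1 (Fin.succ i)
    · rintro ⟨⟨h0, h1⟩, ⟨h2, h3⟩⟩
      constructor <;> intro i <;> refine Fin.cases ?_ (fun i => ?_) i <;> simp_all [Pi.le_def]
  have := hmp.setLIntegral_comp_preimage_emb
    (MeasurableEquiv.piFinSuccAbove (fun _ : Fin (d+1) => ℝ) 0).symm.measurableEmbedding
    (fun y => g (pvol y)) (cube (d+1))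
  simp_rw [← MeasureTheory.volume_pi] at this
  rw [← this, hpre]
  have hpv : ∀ p : ℝ × (Fin d → ℝ),
      pvol ((MeasurableEquiv.piFinSuccAbove (fun _ : Fin (d+1) => ℝ) 0).symm p)
        = p.1 * pvol p.2 := by
    intro p
    simp only [MeasurableEquiv.piFinSuccAbove_symm_apply, pvol]
    rw [Fin.prod_univ_succ]
    simp [Fin.insertNthEquiv]
  simp_rw [hpv]
  rw [← Measure.prod_restrict, MeasureTheory.lintegral_prod]
  exact (hg.comp (measurable_fst.mul (measurable_pvol.comp measurable_snd))).aemeasurable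

lemma lint_ofReal_rpow (r : ℝ) {a b : ℝ} (ha : 0 ≤ a) (hab : a ≤ b)
    (hi : IntervalIntegrable (fun t => t ^ r) volume a b) :
    ∫⁻ t in Set.Ioc a b, ENNReal.ofReal (t ^ r) = ENNReal.ofReal (∫ t in a..b, t ^ r) := by
  rw [intervalIntegral.integral_of_le hab,
    ofReal_integral_eq_lintegral_ofReal
      ((intervalIntegrable_iff_integrableOn_Ioc_of_le hab).mp hi)
      ((ae_restrict_iff' measurableSet_Ioc).mpr (Filter.Eventually.of_forall fun t ht =>
        Real.rpow_nonneg (le_trans ha ht.1.le) r))]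

lemma sqrt_inv_rpow {t : ℝ} (ht : 0 < t) : (Real.sqrt t)⁻¹ = t ^ (-(1/2) : ℝ) := by
  rw [Real.sqrt_eq_rpow, ← Real.rpow_neg ht.le]

lemma L1 {ε : ℝ} (hε : 0 < ε) :
    ∫⁻ t in Set.Ioc (0:ℝ) ε, ENNReal.ofReal ((Real.sqrt t)⁻¹)
      = ENNReal.ofReal (2 * Real.sqrt ε) := by
  rw [setLIntegral_congr_fun measurableSet_Ioc
    (fun t (ht : t ∈ Set.Ioc (0:ℝ) ε) =>
      by rw [sqrt_inv_rpow ht.1]),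
    lint_ofReal_rpow _ le_rfl hε.le (intervalIntegrable_rpow' (by norm_num)),
    integral_rpow (Or.inl (by norm_num))]
  congr 1
  rw [Real.zero_rpow (by norm_num : (-(1/2:ℝ)+1) ≠ 0), Real.sqrt_eq_rpow]
  norm_num
  ring

lemma L2 {a : ℝ} (ha : 0 < a) (ha1 : a ≤ 1) :
    ∫⁻ t in Set.Ioc a 1, ENNReal.ofReal t⁻¹ = ENNReal.ofReal (Real.log a⁻¹) := by
  have hmem : (0:ℝ) ∉ Set.uIcc a 1 := by
    rw [Set.uIcc_of_le ha1]; exact fun h => absurd h.1 (not_le.mpr ha)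
  have h := ofReal_integral_eq_lintegral_ofReal
      ((intervalIntegrable_iff_integrableOn_Ioc_of_le ha1).mp
        (intervalIntegrable_inv (μ := volume) (f := fun x => x) (fun x hx => by
          rw [Set.uIcc_of_le ha1] at hx; exact (ha.trans_le hx.1).ne') continuousOn_id))
      ((ae_restrict_iff' measurableSet_Ioc).mpr (Filter.Eventually.of_forall fun t ht =>
        (inv_nonneg).mpr (ha.le.trans ht.1.le)))
  refine Eq.trans h.symm ?_
  congr 1
  show (∫ x in Set.Ioc a 1, x⁻¹) = Real.log a⁻¹
  rw [← intervalIntegral.integral_of_le ha1, integral_inv hmem, one_div]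

lemma L3 {a : ℝ} (ha : 0 < a) (ha1 : a ≤ 1) :
    ∫⁻ t in Set.Ioc a 1, ENNReal.ofReal ((Real.sqrt t)⁻¹ * t⁻¹)
      ≤ ENNReal.ofReal (2 * (Real.sqrt a)⁻¹) := by
  have hmem : (0:ℝ) ∉ Set.uIcc a 1 := by
    rw [Set.uIcc_of_le ha1]; exact fun h => absurd h.1 (not_le.mpr ha)
  rw [setLIntegral_congr_fun measurableSet_Ioc
    (fun t (ht : t ∈ Set.Ioc a 1) => by
      rw [sqrt_inv_rpow (ha.trans ht.1), ← Real.rpow_neg_one t,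
        ← Real.rpow_add (ha.trans ht.1)]),
    lint_ofReal_rpow _ ha.le ha1 (intervalIntegrable_rpow (Or.inr hmem)),
    integral_rpow (Or.inr ⟨by norm_num, hmem⟩)]
  apply ENNReal.ofReal_le_ofReal
  rw [Real.one_rpow]
  have h2 : a ^ (-(1/2) + -1 + 1 : ℝ) = (Real.sqrt a)⁻¹ := by
    rw [sqrt_inv_rpow ha]; norm_num
  rw [h2]
  have h3 : (0:ℝ) < (Real.sqrt a)⁻¹ := by positivity
  rw [div_le_iff_of_neg (by norm_num : (-(1/2:ℝ)+ -1 + 1) < 0)]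
  nlinarith [h3]

lemma key_pow_exp {c : ℝ} (hc : 0 < c) (n : ℕ) {x : ℝ} (hx : 0 ≤ x) :
    x ^ n ≤ ((n.factorial : ℝ) / c ^ n) * Real.exp (c * x) := by
  have h := Real.pow_div_factorial_le_exp (c * x) (mul_nonneg hc.le hx) n
  rw [mul_pow, div_le_iff₀ (by positivity : (0:ℝ) < (n.factorial : ℝ))] at h
  rw [div_mul_eq_mul_div, le_div_iff₀ (pow_pos hc n)]
  calc x ^ n * c ^ n = c ^ n * x ^ n := by ring
    _ ≤ (n.factorial : ℝ) * Real.exp (c * x) := by linarith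

lemma psi_bound (β : ℝ) (hβ : 0 < β) (j : ℕ) :
    ∃ A : ℝ, 0 < A ∧ ∀ u : ℝ, 0 < u →
      Real.exp (-(β * u)) * |Real.log u| ^ j ≤ A * (Real.sqrt u)⁻¹ ∧
      Real.exp (-(β * u)) * |Real.log u| ^ j ≤ A * ((Real.sqrt u)⁻¹ * u⁻¹) := by
  set c₁ : ℝ := (j.factorial : ℝ) / (1/2) ^ j with hc₁
  set c₂ : ℝ := ((j+1).factorial : ℝ) / β ^ (j+1) with hc₂
  set c₃ : ℝ := ((j+2).factorial : ℝ) / β ^ (j+2) with hc₃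
  have hc₁p : 0 < c₁ := by positivity
  have hc₂p : 0 < c₂ := by positivity
  have hc₃p : 0 < c₃ := by positivity
  refine ⟨c₁ + c₂ + c₃, by positivity, fun u hu => ?_⟩
  have hsq : 0 < Real.sqrt u := Real.sqrt_pos.mpr hu
  have hsqi : 0 < (Real.sqrt u)⁻¹ := by positivity
  have hexple : Real.exp (-(β * u)) ≤ 1 :=
    Real.exp_le_one_iff.mpr (by nlinarith)
  rcases le_or_gt u 1 with h1 | h1
  · -- u ≤ 1
    have hlog : Real.log u ≤ 0 := Real.log_nonpos hu.le h1
    have habs : |Real.log u| = -Real.log u := abs_of_nonpos hlog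
    have hxnn : 0 ≤ -Real.log u := by linarith
    have hsqrtinv : (Real.sqrt u)⁻¹ = Real.exp ((1/2) * (-Real.log u)) := by
      rw [← Real.exp_log hsq, ← Real.exp_neg, Real.log_sqrt hu.le]
      congr 1; ring
    have hkey := key_pow_exp (by norm_num : (0:ℝ) < 1/2) j hxnn
    have h2 : Real.exp (-(β * u)) * |Real.log u| ^ j ≤ c₁ * (Real.sqrt u)⁻¹ := by
      rw [habs, hsqrtinv]
      calc Real.exp (-(β * u)) * (-Real.log u) ^ j ≤ 1 * (-Real.log u) ^ j := by
            apply mul_le_mul_of_nonneg_right hexple (by positivity)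
        _ = (-Real.log u) ^ j := one_mul _
        _ ≤ c₁ * Real.exp ((1/2) * (-Real.log u)) := hkey
    have hui : 1 ≤ u⁻¹ := by nlinarith [mul_inv_cancel₀ hu.ne', inv_pos.mpr hu]
    constructor
    · calc Real.exp (-(β * u)) * |Real.log u| ^ j ≤ c₁ * (Real.sqrt u)⁻¹ := h2
        _ ≤ (c₁ + c₂ + c₃) * (Real.sqrt u)⁻¹ := by nlinarith
    · calc Real.exp (-(β * u)) * |Real.log u| ^ j ≤ c₁ * (Real.sqrt u)⁻¹ := h2
        _ ≤ (c₁ + c₂ + c₃) * ((Real.sqrt u)⁻¹ * u⁻¹) := by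
            nlinarith [mul_pos hsqi (inv_pos.mpr hu), mul_le_mul_of_nonneg_left hui (mul_pos hc₁p hsqi).le]
  · -- 1 < u
    have habs : |Real.log u| = Real.log u := abs_of_nonneg (Real.log_nonneg h1.le)
    have hlogu : Real.log u ≤ u := by
      have := Real.log_le_sub_one_of_pos hu; linarith
    have hpow : |Real.log u| ^ j ≤ u ^ j := by
      apply pow_le_pow_left₀ (abs_nonneg _) (by rw [habs]; exact hlogu)
    have hbound : ∀ n : ℕ, Real.exp (-(β * u)) * u ^ n ≤ (n.factorial : ℝ) / β ^ n := by
      intro n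
      have h := key_pow_exp hβ n (le_of_lt hu)
      calc Real.exp (-(β * u)) * u ^ n
          ≤ Real.exp (-(β * u)) * (((n.factorial : ℝ) / β ^ n) * Real.exp (β * u)) :=
            mul_le_mul_of_nonneg_left h (Real.exp_nonneg _)
        _ = ((n.factorial : ℝ) / β ^ n) * (Real.exp (-(β * u)) * Real.exp (β * u)) := by ring
        _ = (n.factorial : ℝ) / β ^ n := by rw [← Real.exp_add]; simp
    have hsu : (Real.sqrt u)⁻¹ ≥ u⁻¹ := by
      apply inv_anti₀ hsq
      nlinarith [Real.sq_sqrt hu.le, Real.sqrt_nonneg u]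
    have hmain : Real.exp (-(β * u)) * |Real.log u| ^ j ≤ Real.exp (-(β * u)) * u ^ j :=
      mul_le_mul_of_nonneg_left hpow (Real.exp_nonneg _)
    constructor
    · have h2 := hbound (j+1)
      have huj : Real.exp (-(β * u)) * u ^ j = (Real.exp (-(β * u)) * u ^ (j+1)) * u⁻¹ := by
        rw [pow_succ]; field_simp
      calc Real.exp (-(β * u)) * |Real.log u| ^ j ≤ Real.exp (-(β * u)) * u ^ j := hmain
        _ = (Real.exp (-(β * u)) * u ^ (j+1)) * u⁻¹ := huj
        _ ≤ c₂ * u⁻¹ := by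
            apply mul_le_mul_of_nonneg_right _ (by positivity)
            exact h2
        _ ≤ c₂ * (Real.sqrt u)⁻¹ := mul_le_mul_of_nonneg_left hsu hc₂p.le
        _ ≤ (c₁ + c₂ + c₃) * (Real.sqrt u)⁻¹ := by nlinarith
    · have h3 := hbound (j+2)
      have huj : Real.exp (-(β * u)) * u ^ j = (Real.exp (-(β * u)) * u ^ (j+2)) * (u⁻¹ * u⁻¹) := by
        rw [pow_add]; field_simp
      calc Real.exp (-(β * u)) * |Real.log u| ^ j ≤ Real.exp (-(β * u)) * u ^ j := hmain
        _ = (Real.exp (-(β * u)) * u ^ (j+2)) * (u⁻¹ * u⁻¹) := huj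
        _ ≤ c₃ * (u⁻¹ * u⁻¹) := by
            apply mul_le_mul_of_nonneg_right _ (by positivity)
            exact h3
        _ ≤ c₃ * ((Real.sqrt u)⁻¹ * u⁻¹) := by
            apply mul_le_mul_of_nonneg_left _ hc₃p.le
            apply mul_le_mul_of_nonneg_right hsu (by positivity)
        _ ≤ (c₁ + c₂ + c₃) * ((Real.sqrt u)⁻¹ * u⁻¹) := by
            nlinarith [mul_pos hsqi (inv_pos.mpr hu)]

noncomputable def psi (β : ℝ) (j : ℕ) (u : ℝ) : ℝ := Real.exp (-(β * u)) * |Real.log u| ^ j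

noncomputable def GG (β : ℝ) (j : ℕ) (σ v : ℝ) : ℝ≥0∞ := ENNReal.ofReal (psi β j (σ * v))

noncomputable def JJ (β : ℝ) (j d : ℕ) (σ : ℝ) : ℝ≥0∞ := ∫⁻ y in cube d, GG β j σ (pvol y)

noncomputable def FF (β : ℝ) (j d : ℕ) (σ : ℝ) : ℝ≥0∞ := ENNReal.ofReal σ * JJ β j d σ

noncomputable def Bd (d : ℕ) (σ : ℝ) : ℝ :=
  if σ ≤ 1 then Real.sqrt σ else (1 + Real.log σ) ^ (d - 1)

lemma measurable_psi (β : ℝ) (j : ℕ) : Measurable (psi β j) := by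
  unfold psi
  exact (Real.measurable_exp.comp (measurable_id.const_mul β).neg).mul
    (Real.measurable_log.abs.pow_const j)

lemma measurable_GG (β : ℝ) (j : ℕ) (σ : ℝ) : Measurable (GG β j σ) :=
  ENNReal.measurable_ofReal.comp ((measurable_psi β j).comp (measurable_id.const_mul σ))

lemma JJ_zero (β : ℝ) (j : ℕ) (σ : ℝ) : JJ β j 0 σ = ENNReal.ofReal (psi β j σ) := by
  unfold JJ
  rw [cube_zero, Measure.restrict_univ]
  have : ∀ y : Fin 0 → ℝ, GG β j σ (pvol y) = ENNReal.ofReal (psi β j σ) := by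
    intro y; rw [pvol_zero]; simp [GG]
  simp_rw [this]
  rw [lintegral_const]
  have : (volume : Measure (Fin 0 → ℝ)) Set.univ = 1 := by
    rw [← cube_zero]; exact volume_cube_zero
  rw [this, mul_one]

lemma lint_const_mul_ofReal {s : Set ℝ} (K : ℝ) (hK : 0 ≤ K) (g : ℝ → ℝ) :
    ∫⁻ t in s, ENNReal.ofReal (K * g t) = ENNReal.ofReal K * ∫⁻ t in s, ENNReal.ofReal (g t) := by
  simp_rw [ENNReal.ofReal_mul hK]
  exact lintegral_const_mul' _ _ ENNReal.ofReal_ne_top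

lemma FF_succ (β : ℝ) (j d : ℕ) (s : ℝ) :
    FF β j (d+1) s = ∫⁻ t in Set.Ioc (0:ℝ) 1, ENNReal.ofReal s * JJ β j d (s * t) := by
  unfold FF JJ
  rw [cube_succ_lintegral d (GG β j s) (measurable_GG β j s)]
  have h1 : ∀ t : ℝ, (∫⁻ y in cube d, GG β j s (t * pvol y))
      = ∫⁻ y in cube d, GG β j (s * t) (pvol y) := by
    intro t
    apply lintegral_congr
    intro y
    unfold GG
    congr 1
    ring_nf
  simp_rw [h1]
  rw [← Measure.restrict_congr_set Ioc_ae_eq_Icc,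
    ← lintegral_const_mul' _ _ ENNReal.ofReal_ne_top]

section Base
open Real in
lemma base_one (β : ℝ) (hβ : 0 < β) (j : ℕ) :
    ∃ C : ℝ, 0 < C ∧ ∀ σ : ℝ, 0 < σ → FF β j 1 σ ≤ ENNReal.ofReal (C * Bd 1 σ) := by
  obtain ⟨A, hA, hbd⟩ := psi_bound β hβ j
  refine ⟨4 * A, by positivity, fun σ hσ => ?_⟩
  have hsqσ : 0 < Real.sqrt σ := Real.sqrt_pos.mpr hσ
  have hrw : FF β j 1 σ = ∫⁻ t in Set.Ioc (0:ℝ) 1, ENNReal.ofReal (σ * psi β j (σ * t)) := by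
    rw [show (1:ℕ) = 0 + 1 from rfl, FF_succ]
    refine lintegral_congr fun t => ?_
    rw [JJ_zero, ← ENNReal.ofReal_mul hσ.le]
  have h2 : ∀ t : ℝ, 0 < t → σ * (A * (Real.sqrt (σ*t))⁻¹)
      = A * Real.sqrt σ * (Real.sqrt t)⁻¹ := by
    intro t ht
    have hsq : Real.sqrt σ * Real.sqrt σ = σ := Real.mul_self_sqrt hσ.le
    have hsqt : (0:ℝ) < Real.sqrt t := Real.sqrt_pos.mpr ht
    rw [Real.sqrt_mul hσ.le, mul_inv]
    field_simp
    linear_combination (-1 : ℝ) * hsq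
  have hptwise1 : ∀ t : ℝ, t ∈ Set.Ioc (0:ℝ) 1 ∨ t ∈ Set.Ioc (0:ℝ) σ⁻¹ →
      ENNReal.ofReal (σ * psi β j (σ * t))
        ≤ ENNReal.ofReal ((A * Real.sqrt σ) * (Real.sqrt t)⁻¹) := by
    intro t ht
    have ht0 : 0 < t := by rcases ht with h | h; exacts [h.1, h.1]
    apply ENNReal.ofReal_le_ofReal
    have h1 := (hbd (σ * t) (mul_pos hσ ht0)).1
    calc σ * psi β j (σ * t) ≤ σ * (A * (Real.sqrt (σ*t))⁻¹) :=
          mul_le_mul_of_nonneg_left h1 hσ.le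
      _ = A * Real.sqrt σ * (Real.sqrt t)⁻¹ := h2 t ht0
  rcases le_or_gt σ 1 with h1 | h1
  · -- σ ≤ 1
    rw [hrw]
    calc ∫⁻ t in Set.Ioc (0:ℝ) 1, ENNReal.ofReal (σ * psi β j (σ * t))
        ≤ ∫⁻ t in Set.Ioc (0:ℝ) 1, ENNReal.ofReal ((A * Real.sqrt σ) * (Real.sqrt t)⁻¹) :=
          setLIntegral_mono' measurableSet_Ioc (fun t ht => hptwise1 t (Or.inl ht))
      _ = ENNReal.ofReal (A * Real.sqrt σ) * ENNReal.ofReal (2 * Real.sqrt 1) := by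
          rw [lint_const_mul_ofReal _ (by positivity), L1 one_pos]
      _ ≤ ENNReal.ofReal ((4*A) * Bd 1 σ) := by
          rw [← ENNReal.ofReal_mul (by positivity), Bd, if_pos h1, Real.sqrt_one]
          apply ENNReal.ofReal_le_ofReal
          nlinarith [hsqσ]
  · -- 1 < σ
    have hi0 : 0 < σ⁻¹ := inv_pos.mpr hσ
    have hi1 : σ⁻¹ ≤ 1 := by nlinarith [mul_inv_cancel₀ hσ.ne']
    have hr1 : ∫⁻ t in Set.Ioc (0:ℝ) σ⁻¹, ENNReal.ofReal (σ * psi β j (σ * t))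
        ≤ ENNReal.ofReal (2 * A) := by
      calc ∫⁻ t in Set.Ioc (0:ℝ) σ⁻¹, ENNReal.ofReal (σ * psi β j (σ * t))
          ≤ ∫⁻ t in Set.Ioc (0:ℝ) σ⁻¹, ENNReal.ofReal ((A * Real.sqrt σ) * (Real.sqrt t)⁻¹) :=
            setLIntegral_mono' measurableSet_Ioc (fun t ht => hptwise1 t (Or.inr ht))
        _ = ENNReal.ofReal (A * Real.sqrt σ) * ENNReal.ofReal (2 * Real.sqrt σ⁻¹) := by
            rw [lint_const_mul_ofReal _ (by positivity), L1 hi0]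
        _ = ENNReal.ofReal (2 * A) := by
            rw [← ENNReal.ofReal_mul (by positivity), Real.sqrt_inv]
            congr 1
            field_simp
    have hr2 : ∫⁻ t in Set.Ioc σ⁻¹ 1, ENNReal.ofReal (σ * psi β j (σ * t))
        ≤ ENNReal.ofReal (2 * A) := by
      have hpt2 : ∀ t : ℝ, t ∈ Set.Ioc σ⁻¹ 1 →
          ENNReal.ofReal (σ * psi β j (σ * t))
            ≤ ENNReal.ofReal ((A * (Real.sqrt σ)⁻¹) * ((Real.sqrt t)⁻¹ * t⁻¹)) := by
        intro t ht
        have ht0 : 0 < t := hi0.trans ht.1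
        have hsqt : (0:ℝ) < Real.sqrt t := Real.sqrt_pos.mpr ht0
        apply ENNReal.ofReal_le_ofReal
        have hb := (hbd (σ * t) (mul_pos hσ ht0)).2
        calc σ * psi β j (σ * t) ≤ σ * (A * ((Real.sqrt (σ*t))⁻¹ * (σ*t)⁻¹)) :=
              mul_le_mul_of_nonneg_left hb hσ.le
          _ = (A * (Real.sqrt σ)⁻¹) * ((Real.sqrt t)⁻¹ * t⁻¹) := by
              rw [Real.sqrt_mul hσ.le, mul_inv, mul_inv]
              field_simp
      calc ∫⁻ t in Set.Ioc σ⁻¹ 1, ENNReal.ofReal (σ * psi β j (σ * t))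
          ≤ ∫⁻ t in Set.Ioc σ⁻¹ 1,
              ENNReal.ofReal ((A * (Real.sqrt σ)⁻¹) * ((Real.sqrt t)⁻¹ * t⁻¹)) :=
            setLIntegral_mono' measurableSet_Ioc hpt2
        _ = ENNReal.ofReal (A * (Real.sqrt σ)⁻¹)
              * ∫⁻ t in Set.Ioc σ⁻¹ 1, ENNReal.ofReal ((Real.sqrt t)⁻¹ * t⁻¹) := by
            rw [lint_const_mul_ofReal _ (by positivity)]
        _ ≤ ENNReal.ofReal (A * (Real.sqrt σ)⁻¹) * ENNReal.ofReal (2 * (Real.sqrt σ⁻¹)⁻¹) :=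
            mul_le_mul_right (L3 hi0 hi1) _
        _ = ENNReal.ofReal (2 * A) := by
            rw [← ENNReal.ofReal_mul (by positivity), Real.sqrt_inv, inv_inv]
            congr 1
            field_simp
    rw [hrw, ← Set.Ioc_union_Ioc_eq_Ioc hi0.le hi1,
      lintegral_union measurableSet_Ioc (Set.Ioc_disjoint_Ioc_of_le le_rfl)]
    calc _ ≤ ENNReal.ofReal (2*A) + ENNReal.ofReal (2*A) := add_le_add hr1 hr2
      _ = ENNReal.ofReal (4*A) := by rw [← ENNReal.ofReal_add (by positivity) (by positivity)]; ring_nf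
      _ ≤ ENNReal.ofReal ((4*A) * Bd 1 σ) := by
          rw [Bd, if_neg (not_le.mpr h1)]
          norm_num
end Base

lemma step_ind (β : ℝ) (j : ℕ) (d : ℕ) (hd : 1 ≤ d)
    (C : ℝ) (hC : 0 < C) (H : ∀ σ : ℝ, 0 < σ → FF β j d σ ≤ ENNReal.ofReal (C * Bd d σ)) :
    ∀ σ : ℝ, 0 < σ → FF β j (d+1) σ ≤ ENNReal.ofReal ((3*C) * Bd (d+1) σ) := by
  intro s hs
  have hsqs : 0 < Real.sqrt s := Real.sqrt_pos.mpr hs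
  rw [FF_succ]
  have hpt : ∀ t : ℝ, t ∈ Set.Ioc (0:ℝ) 1 →
      ENNReal.ofReal s * JJ β j d (s * t) ≤ ENNReal.ofReal (t⁻¹ * (C * Bd d (s*t))) := by
    intro t ht
    have ht0 : 0 < t := ht.1
    have key : ENNReal.ofReal s * JJ β j d (s*t) = ENNReal.ofReal t⁻¹ * FF β j d (s*t) := by
      unfold FF
      rw [← mul_assoc, ← ENNReal.ofReal_mul (inv_nonneg.mpr ht0.le)]
      congr 2
      field_simp
    rw [key, ENNReal.ofReal_mul (inv_nonneg.mpr ht0.le)]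
    exact mul_le_mul_right (H (s*t) (mul_pos hs ht0)) _
  refine le_trans (setLIntegral_mono' measurableSet_Ioc hpt) ?_
  have heq1 : ∀ t : ℝ, 0 < t → s * t ≤ 1 →
      t⁻¹ * (C * Bd d (s*t)) = (C * Real.sqrt s) * (Real.sqrt t)⁻¹ := by
    intro t ht0 hst1
    have hsqt : Real.sqrt t * Real.sqrt t = t := Real.mul_self_sqrt ht0.le
    have hsqtp : 0 < Real.sqrt t := Real.sqrt_pos.mpr ht0
    rw [Bd, if_pos hst1, Real.sqrt_mul hs.le]
    field_simp
    linear_combination hsqt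
  rcases le_or_gt s 1 with h1 | h1
  · -- small s
    have hpt2 : ∀ t ∈ Set.Ioc (0:ℝ) 1, ENNReal.ofReal (t⁻¹ * (C * Bd d (s*t)))
        ≤ ENNReal.ofReal ((C * Real.sqrt s) * (Real.sqrt t)⁻¹) := by
      intro t ht
      have hst1 : s * t ≤ 1 := by nlinarith [ht.1, ht.2]
      exact le_of_eq (by rw [heq1 t ht.1 hst1])
    calc ∫⁻ t in Set.Ioc (0:ℝ) 1, ENNReal.ofReal (t⁻¹ * (C * Bd d (s*t)))
        ≤ ∫⁻ t in Set.Ioc (0:ℝ) 1, ENNReal.ofReal ((C * Real.sqrt s) * (Real.sqrt t)⁻¹) :=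
          setLIntegral_mono' measurableSet_Ioc hpt2
      _ = ENNReal.ofReal (C * Real.sqrt s) * ENNReal.ofReal (2 * Real.sqrt 1) := by
          rw [lint_const_mul_ofReal _ (by positivity), L1 one_pos]
      _ ≤ ENNReal.ofReal ((3*C) * Bd (d+1) s) := by
          rw [← ENNReal.ofReal_mul (by positivity), Bd, if_pos h1, Real.sqrt_one]
          apply ENNReal.ofReal_le_ofReal
          nlinarith [hsqs]
  · -- large s
    have hi0 : 0 < s⁻¹ := inv_pos.mpr hs
    have hi1 : s⁻¹ ≤ 1 := by nlinarith [mul_inv_cancel₀ hs.ne']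
    have hr1 : ∫⁻ t in Set.Ioc (0:ℝ) s⁻¹, ENNReal.ofReal (t⁻¹ * (C * Bd d (s*t)))
        ≤ ENNReal.ofReal (2 * C) := by
      have hpt2 : ∀ t ∈ Set.Ioc (0:ℝ) s⁻¹, ENNReal.ofReal (t⁻¹ * (C * Bd d (s*t)))
          ≤ ENNReal.ofReal ((C * Real.sqrt s) * (Real.sqrt t)⁻¹) := by
        intro t ht
        have hst1 : s * t ≤ 1 := by
          have := mul_le_mul_of_nonneg_left ht.2 hs.le
          rwa [mul_inv_cancel₀ hs.ne'] at this
        exact le_of_eq (by rw [heq1 t ht.1 hst1])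
      calc ∫⁻ t in Set.Ioc (0:ℝ) s⁻¹, ENNReal.ofReal (t⁻¹ * (C * Bd d (s*t)))
          ≤ ∫⁻ t in Set.Ioc (0:ℝ) s⁻¹, ENNReal.ofReal ((C * Real.sqrt s) * (Real.sqrt t)⁻¹) :=
            setLIntegral_mono' measurableSet_Ioc hpt2
        _ = ENNReal.ofReal (C * Real.sqrt s) * ENNReal.ofReal (2 * Real.sqrt s⁻¹) := by
            rw [lint_const_mul_ofReal _ (by positivity), L1 hi0]
        _ = ENNReal.ofReal (2 * C) := by
            rw [← ENNReal.ofReal_mul (by positivity), Real.sqrt_inv]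
            congr 1
            field_simp
    have hL : 0 < Real.log s := Real.log_pos h1
    have hr2 : ∫⁻ t in Set.Ioc s⁻¹ 1, ENNReal.ofReal (t⁻¹ * (C * Bd d (s*t)))
        ≤ ENNReal.ofReal ((C * (1 + Real.log s)^(d-1)) * Real.log s) := by
      have hpt2 : ∀ t ∈ Set.Ioc s⁻¹ 1, ENNReal.ofReal (t⁻¹ * (C * Bd d (s*t)))
          ≤ ENNReal.ofReal ((C * (1 + Real.log s)^(d-1)) * t⁻¹) := by
        intro t ht
        have ht0 : 0 < t := hi0.trans ht.1
        have hst1 : 1 < s * t := by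
          have := mul_lt_mul_of_pos_left ht.1 hs
          rwa [mul_inv_cancel₀ hs.ne'] at this
        apply ENNReal.ofReal_le_ofReal
        rw [Bd, if_neg (not_le.mpr hst1)]
        have hlog0 : 0 ≤ Real.log (s*t) := Real.log_nonneg hst1.le
        have hlogle : Real.log (s*t) ≤ Real.log s :=
          Real.log_le_log (by positivity) (by nlinarith [ht.2])
        have hpow : (1 + Real.log (s*t))^(d-1) ≤ (1 + Real.log s)^(d-1) :=
          pow_le_pow_left₀ (by linarith) (by linarith) (d-1)
        have hti : 0 ≤ t⁻¹ := by positivity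
        calc t⁻¹ * (C * (1 + Real.log (s*t))^(d-1))
            ≤ t⁻¹ * (C * (1 + Real.log s)^(d-1)) := by
              apply mul_le_mul_of_nonneg_left _ hti
              exact mul_le_mul_of_nonneg_left hpow hC.le
          _ = (C * (1 + Real.log s)^(d-1)) * t⁻¹ := by ring
      calc ∫⁻ t in Set.Ioc s⁻¹ 1, ENNReal.ofReal (t⁻¹ * (C * Bd d (s*t)))
          ≤ ∫⁻ t in Set.Ioc s⁻¹ 1, ENNReal.ofReal ((C * (1 + Real.log s)^(d-1)) * t⁻¹) :=
            setLIntegral_mono' measurableSet_Ioc hpt2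
        _ = ENNReal.ofReal (C * (1 + Real.log s)^(d-1)) * ENNReal.ofReal (Real.log (s⁻¹)⁻¹) := by
            rw [lint_const_mul_ofReal _ (by positivity), L2 hi0 hi1]
        _ = ENNReal.ofReal ((C * (1 + Real.log s)^(d-1)) * Real.log s) := by
            rw [← ENNReal.ofReal_mul (by positivity), inv_inv]
    rw [← Set.Ioc_union_Ioc_eq_Ioc hi0.le hi1,
      lintegral_union measurableSet_Ioc (Set.Ioc_disjoint_Ioc_of_le le_rfl)]
    have hpowd : (1 + Real.log s)^(d-1) * Real.log s ≤ (1 + Real.log s)^d := by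
      have h := mul_le_mul_of_nonneg_left (by linarith : Real.log s ≤ 1 + Real.log s)
        (pow_nonneg (by linarith : (0:ℝ) ≤ 1 + Real.log s) (d-1))
      rw [← pow_succ, Nat.sub_add_cancel hd] at h
      linarith
    have hpow1 : 1 ≤ (1 + Real.log s)^d := one_le_pow₀ (by linarith)
    calc _ ≤ ENNReal.ofReal (2*C) + ENNReal.ofReal ((C * (1 + Real.log s)^(d-1)) * Real.log s) :=
          add_le_add hr1 hr2
      _ = ENNReal.ofReal (2*C + (C * (1 + Real.log s)^(d-1)) * Real.log s) := by
          rw [← ENNReal.ofReal_add (by positivity) (by positivity)]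
      _ ≤ ENNReal.ofReal ((3*C) * Bd (d+1) s) := by
          rw [Bd, if_neg (not_le.mpr h1), Nat.add_sub_cancel]
          apply ENNReal.ofReal_le_ofReal
          nlinarith [hpowd, hpow1, hC]

lemma main_aux (β : ℝ) (hβ : 0 < β) (j : ℕ) :
    ∀ d : ℕ, 1 ≤ d → ∃ C : ℝ, 0 < C ∧ ∀ σ : ℝ, 0 < σ →
      FF β j d σ ≤ ENNReal.ofReal (C * Bd d σ) := by
  intro d hd
  induction d, hd using Nat.le_induction with
  | base => exact base_one β hβ j
  | succ d hd ih =>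
    obtain ⟨C, hC, H⟩ := ih
    exact ⟨3*C, by positivity, step_ind β j d hd C hC H⟩


/-- The function `c_{α,s}(y) = s ∫_{[0,1]^d} 1_{x ⪰ y} e^{-α s |x|} dx`. -/
noncomputable def cAS {d : ℕ} (α s : ℝ) (y : Fin d → ℝ) : ℝ :=
  s * ∫ x in cube d,
    Set.indicator {x : Fin d → ℝ | y ≤ x} (fun x => Real.exp (-(α * s * pvol x))) x

/-- For every `d ∈ ℕ`, `α > 0` and integer `j ≥ 0` there is `C > 0` depending only on
`d`, `α`, `j` with `s ∫_{[0,1]^d} e^{-α s |y|} |log(s|y|)|^j dy ≤ C (1 + log s)^{d-1}`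
for all `s ≥ 1`. -/
theorem stmt10 (d : ℕ) (hd : 1 ≤ d) (α : ℝ) (hα : 0 < α) (j : ℕ) :
    ∃ C : ℝ, 0 < C ∧ ∀ s : ℝ, 1 ≤ s →
      s * ∫ y in cube d, Real.exp (-(α * s * pvol y)) * |Real.log (s * pvol y)| ^ j ≤
        C * (1 + Real.log s) ^ (d - 1) := by
  obtain ⟨C, hC, H⟩ := main_aux α hα j d hd
  refine ⟨C, hC, fun s hs => ?_⟩
  have hs0 : 0 < s := lt_of_lt_of_le one_pos hs
  have hL0 : 0 ≤ Real.log s := Real.log_nonneg hs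
  have hm : Measurable fun y : Fin d → ℝ =>
      Real.exp (-(α * s * pvol y)) * |Real.log (s * pvol y)| ^ j :=
    (Real.measurable_exp.comp (measurable_pvol.const_mul (α*s)).neg).mul
      (((Real.measurable_log.comp (measurable_pvol.const_mul s)).abs).pow_const j)
  have hint : (∫ y in cube d, Real.exp (-(α * s * pvol y)) * |Real.log (s * pvol y)| ^ j)
      = (JJ α j d s).toReal := by
    rw [MeasureTheory.integral_eq_lintegral_of_nonneg_ae
      (Filter.Eventually.of_forall fun y => by positivity) hm.aestronglyMeasurable]
    congr 1
    unfold JJ GG psi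
    refine lintegral_congr fun y => ?_
    congr 2
    ring
  have hFF := H s hs0
  have hBd : C * Bd d s ≤ C * (1 + Real.log s)^(d-1) := by
    unfold Bd
    rcases le_or_gt s 1 with h | h
    · have hs1 : s = 1 := le_antisymm h hs
      simp [hs1]
    · rw [if_neg (not_le.mpr h)]
  have hR0 : 0 ≤ C * (1 + Real.log s)^(d-1) := by positivity
  have hlt : FF α j d s ≤ ENNReal.ofReal (C * (1 + Real.log s)^(d-1)) :=
    le_trans hFF (ENNReal.ofReal_le_ofReal hBd)
  rw [hint]
  have hfr : s * (JJ α j d s).toReal = (FF α j d s).toReal := by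
    rw [FF, ENNReal.toReal_mul, ENNReal.toReal_ofReal hs0.le]
  rw [hfr]
  calc (FF α j d s).toReal ≤ (ENNReal.ofReal (C * (1 + Real.log s)^(d-1))).toReal :=
        ENNReal.toReal_mono ENNReal.ofReal_ne_top hlt
    _ = C * (1 + Real.log s)^(d-1) := ENNReal.toReal_ofReal hR0
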